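/- K₂ of a finite field is trivial: for 𝔽_q, the group (𝔽_q^× ⊗ 𝔽_q^×)/⟨a ⊗ (1−a) : a ≠ 0, 1⟩ is the trivial group. -/

import Mathlib

open scoped TensorProduct

noncomputable section

variable (F : Type) [Field F]

/-- The set of Steinberg relations `a ⊗ (1 − a)` (for `a ≠ 0, 1`) inside `F^× ⊗_ℤ F^×`. -/
def steinbergSet : Set (TensorProduct ℤ (Additive Fˣ) (Additive Fˣ)) :=
  {x | ∃ u v : Fˣ, (u : F) + (v : F) = 1 ∧
    x = (Additive.ofMul u) ⊗ₜ[ℤ] (Additive.ofMul v)}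

/-- The Milnor K-group `K₂(F) = (F^× ⊗_ℤ F^×)/⟨a ⊗ (1−a) : a ≠ 0, 1⟩`. -/
abbrev K2 := (TensorProduct ℤ (Additive Fˣ) (Additive Fˣ)) ⧸ Submodule.span ℤ (steinbergSet F)

/-- Bridge lemma for the `ℤ`-scalar action on the left factor. -/
lemma k2aux_smul_tmul (k : ℤ) (y z : Additive Fˣ) :
    (k • y) ⊗ₜ[ℤ] z = k • (y ⊗ₜ[ℤ] z) :=
  (TensorProduct.smul_tmul' k y z).symm

/-- Bridge lemma for the `ℤ`-scalar action on the right factor. -/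
lemma k2aux_tmul_smul (k : ℤ) (y z : Additive Fˣ) :
    y ⊗ₜ[ℤ] (k • z) = k • (y ⊗ₜ[ℤ] z) :=
  TensorProduct.tmul_smul k y z

open Finset in
/-- In a finite field of odd characteristic there are two nonsquares summing to `1`. -/
lemma k2aux_exists_nonsquares_add_eq_one (F : Type) [Field F] [Fintype F] [DecidableEq F]
    (hF : ringChar F ≠ 2) :
    ∃ a b : F, ¬IsSquare a ∧ ¬IsSquare b ∧ a + b = 1 := by
  by_contra hcon
  push_neg at hcon
  have hsq0 : IsSquare (0 : F) := ⟨0, by ring⟩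
  have hsq1 : IsSquare (1 : F) := ⟨1, by ring⟩
  set e := Fintype.card F / 2 with he
  have hchar : ∀ x : F, x ≠ 0 → (IsSquare x ↔ x ^ e = 1) := fun x hx =>
    FiniteField.isSquare_iff hF hx
  have hneg : (-1 : F) ≠ 1 := Ring.neg_one_ne_one_of_char_ne_two hF
  have hns : ∀ x : F, ¬IsSquare x → x ^ e = -1 := by
    intro x hx
    have hx0 : x ≠ 0 := fun h => hx (h ▸ hsq0)
    rcases FiniteField.pow_dichotomy hF hx0 with h | h
    · exact absurd ((hchar x hx0).mpr h) hx
    · exact h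
  classical
  set A : Finset F := univ.filter (fun x => x ≠ 0 ∧ IsSquare x) with hA
  set B : Finset F := univ.filter (fun x => ¬IsSquare x) with hB
  obtain ⟨c, hc⟩ := FiniteField.exists_nonsquare (F := F) hF
  have hc0 : c ≠ 0 := fun h => hc (h ▸ hsq0)
  have hce : c ^ e = -1 := hns c hc
  have hcard : A.card = B.card := by
    apply Finset.card_bij' (fun x _ => c * x) (fun y _ => c⁻¹ * y)
    · intro x hx
      simp only [hA, mem_filter, mem_univ, true_and] at hx
      simp only [hB, mem_filter, mem_univ, true_and]
      intro hsq
      have : (c * x) ^ e = 1 := (hchar _ (mul_ne_zero hc0 hx.1)).mp hsq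
      rw [mul_pow, hce, (hchar x hx.1).mp hx.2, mul_one] at this
      exact hneg this
    · intro y hy
      simp only [hB, mem_filter, mem_univ, true_and] at hy
      have hy0 : y ≠ 0 := fun h => hy (h ▸ hsq0)
      simp only [hA, mem_filter, mem_univ, true_and]
      refine ⟨mul_ne_zero (inv_ne_zero hc0) hy0, ?_⟩
      rw [hchar _ (mul_ne_zero (inv_ne_zero hc0) hy0), mul_pow, hns y hy,
        inv_pow, hce]
      norm_num
    · intro x hx
      simp only [hA, mem_filter, mem_univ, true_and] at hx
      field_simp
    · intro y hy
      simp only [hB, mem_filter, mem_univ, true_and] at hy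
      field_simp
  have hinj : B.card ≤ (A.erase 1).card := by
    apply Finset.card_le_card_of_injOn (fun x => 1 - x)
    · intro x hx
      simp only [hB, mem_coe, mem_filter, mem_univ, true_and] at hx
      have hx0 : x ≠ 0 := fun h => hx (h ▸ hsq0)
      have hx1 : x ≠ 1 := fun h => hx (h ▸ hsq1)
      have hsq : IsSquare (1 - x) := by
        by_contra h
        exact (hcon x (1 - x) hx h) (by ring)
      simp only [mem_coe, mem_erase, hA, mem_filter, mem_univ, true_and]
      refine ⟨?_, sub_ne_zero.mpr (Ne.symm hx1), hsq⟩
      intro h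
      apply hx0
      have : (1 : F) - x = 1 := h
      linear_combination -this
    · intro x _ y _ h
      have : (1 : F) - x = 1 - y := h
      linear_combination -this
  have h1A : (1 : F) ∈ A := by simp [hA, hsq1]
  have hBne : B.Nonempty := ⟨c, by simp [hB, hc]⟩
  have h2 := Finset.card_erase_of_mem h1A
  have h3 := Finset.card_pos.mpr hBne
  omega

/-- The Steinberg relation applied twice gives `a ⊗ (-a) ∈ ⟨Steinberg relations⟩`. -/
lemma k2aux_steinberg_neg (u : Fˣ) (hu : (u : F) ≠ 1) :
    (Additive.ofMul u) ⊗ₜ[ℤ] (Additive.ofMul (-u)) ∈ Submodule.span ℤ (steinbergSet F) := by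
  have hu0 : (u : F) ≠ 0 := u.ne_zero
  have h1 : (1 : F) - (u : F) ≠ 0 := sub_ne_zero.mpr (Ne.symm hu)
  have hui : (u : F)⁻¹ ≠ 1 := by
    intro h
    exact hu (by rw [← inv_inv (u : F), h, inv_one])
  have h2 : (1 : F) - (u : F)⁻¹ ≠ 0 := sub_ne_zero.mpr (Ne.symm hui)
  set v : Fˣ := Units.mk0 _ h1 with hv
  set w : Fˣ := Units.mk0 _ h2 with hw
  have r1 : (Additive.ofMul u) ⊗ₜ[ℤ] (Additive.ofMul v) ∈ steinbergSet F :=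
    ⟨u, v, by simp [hv], rfl⟩
  have r2 : (Additive.ofMul u⁻¹) ⊗ₜ[ℤ] (Additive.ofMul w) ∈ steinbergSet F := by
    refine ⟨u⁻¹, w, ?_, rfl⟩
    rw [hw]
    simp only [Units.val_inv_eq_inv_val, Units.val_mk0]
    ring
  have h1' : (-1 : F) + (u : F) ≠ 0 := fun h => h1 (by linear_combination -h)
  have huvw : -u = v * w⁻¹ := by
    apply Units.ext
    rw [Units.val_neg, Units.val_mul, hv, hw]
    simp only [Units.val_mk0, Units.val_inv_eq_inv_val]
    rw [← div_eq_mul_inv, eq_div_iff h2]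
    field_simp
    ring
  have key : Additive.ofMul (-u) = Additive.ofMul v - Additive.ofMul w := by
    rw [huvw, ofMul_mul, ofMul_inv, sub_eq_add_neg]
  have key2 : Additive.ofMul u = - Additive.ofMul (u⁻¹) := by
    rw [ofMul_inv, neg_neg]
  rw [key, TensorProduct.tmul_sub]
  have : (Additive.ofMul u) ⊗ₜ[ℤ] (Additive.ofMul w)
      = -((Additive.ofMul u⁻¹) ⊗ₜ[ℤ] (Additive.ofMul w)) := by
    rw [key2, TensorProduct.neg_tmul]
  rw [this, sub_neg_eq_add]
  exact add_mem (Submodule.subset_span r1) (Submodule.subset_span r2)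

/-- `K₂` of a finite field is trivial. -/
theorem k2_finite_field_trivial (F : Type) [Field F] [Fintype F] :
    Subsingleton (K2 F) := by
  classical
  rw [Submodule.Quotient.subsingleton_iff]
  set N := Submodule.span ℤ (steinbergSet F) with hN
  obtain ⟨g, hg⟩ := IsCyclic.exists_generator (α := Fˣ)
  set x : Additive Fˣ := Additive.ofMul g with hx
  set t : TensorProduct ℤ (Additive Fˣ) (Additive Fˣ) := x ⊗ₜ[ℤ] x with hxt
  suffices ht : t ∈ N by
    rw [eq_top_iff]
    refine le_trans (TensorProduct.span_tmul_eq_top ℤ (Additive Fˣ) (Additive Fˣ)).ge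
      (Submodule.span_le.mpr ?_)
    rintro _ ⟨a, b, rfl⟩
    obtain ⟨i, hi⟩ := Subgroup.mem_zpowers_iff.mp (hg (Additive.toMul a))
    obtain ⟨j, hj⟩ := Subgroup.mem_zpowers_iff.mp (hg (Additive.toMul b))
    have ha : a = i • x := by rw [hx, ← ofMul_zpow, hi, ofMul_toMul]
    have hb : b = j • x := by rw [hx, ← ofMul_zpow, hj, ofMul_toMul]
    have : a ⊗ₜ[ℤ] b = (i * j) • t := by
      rw [ha, hb, k2aux_smul_tmul F, k2aux_tmul_smul F, smul_smul, hxt]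
    rw [this]
    exact Submodule.smul_mem _ _ ht
  by_cases htriv : g = 1
  · have hx0 : x = 0 := by rw [hx, htriv, ofMul_one]
    rw [hxt, hx0, TensorProduct.zero_tmul]
    exact zero_mem _
  have hgne : (g : F) ≠ 1 := fun h => htriv (Units.ext h)
  set T : ℤ →ₗ[ℤ] TensorProduct ℤ (Additive Fˣ) (Additive Fˣ) :=
    LinearMap.toSpanSingleton ℤ _ t with hT
  set I : Submodule ℤ ℤ := N.comap T with hI
  have hmem : ∀ k : ℤ, k ∈ I ↔ k • t ∈ N := by
    intro k
    rw [hI, Submodule.mem_comap, hT, LinearMap.toSpanSingleton_apply]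
  have hA := k2aux_steinberg_neg F g hgne
  obtain ⟨m, hm⟩ := Subgroup.mem_zpowers_iff.mp (hg (-1))
  have hAm : (m + 1 : ℤ) ∈ I := by
    rw [hmem]
    have hng : Additive.ofMul (-g) = m • x + x := by
      rw [show -g = (-1) * g from (neg_one_mul g).symm, ofMul_mul, ← hm, ofMul_zpow, hx]
    have : (m + 1 : ℤ) • t = x ⊗ₜ[ℤ] (Additive.ofMul (-g)) := by
      rw [hng, TensorProduct.tmul_add, k2aux_tmul_smul F, add_smul, one_smul, hxt]
    rw [this, hx]
    exact hA
  by_cases hchar : ringChar F = 2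
  · haveI : CharP F 2 := ringChar.of_eq hchar
    have h20 : (2 : F) = 0 := by
      have := CharP.cast_eq_zero F 2
      exact_mod_cast this
    have hgg : -g = g := by
      apply Units.ext
      rw [Units.val_neg]
      linear_combination (-(g : F)) * h20
    rw [hgg] at hA
    exact hA
  · obtain ⟨a, b, hna, hnb, hab⟩ := k2aux_exists_nonsquares_add_eq_one F hchar
    have hsq0 : IsSquare (0 : F) := ⟨0, by ring⟩
    have ha0 : a ≠ 0 := fun h => hna (h ▸ hsq0)
    have hb0 : b ≠ 0 := fun h => hnb (h ▸ hsq0)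
    obtain ⟨i, hi⟩ := Subgroup.mem_zpowers_iff.mp (hg (Units.mk0 a ha0))
    obtain ⟨j, hj⟩ := Subgroup.mem_zpowers_iff.mp (hg (Units.mk0 b hb0))
    have hsq_of_even : ∀ (k : ℤ) (c : F) (hc : c ≠ 0), g ^ (2 * k) = Units.mk0 c hc →
        IsSquare c := by
      intro k c hc hk
      refine ⟨((g ^ k : Fˣ) : F), ?_⟩
      have : ((g ^ (2 * k) : Fˣ) : F) = c := by rw [hk, Units.val_mk0]
      rw [← this, two_mul, zpow_add, Units.val_mul]
    have hoddi : Odd i := by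
      rcases Int.even_or_odd i with he | ho
      · obtain ⟨k, hk⟩ := he
        exact absurd (hsq_of_even k a ha0 (by rw [two_mul, ← hk, hi])) hna
      · exact ho
    have hoddj : Odd j := by
      rcases Int.even_or_odd j with he | ho
      · obtain ⟨k, hk⟩ := he
        exact absurd (hsq_of_even k b hb0 (by rw [two_mul, ← hk, hj])) hnb
      · exact ho
    have hrel : (i * j : ℤ) ∈ I := by
      rw [hmem]
      have : (Additive.ofMul (Units.mk0 a ha0)) ⊗ₜ[ℤ] (Additive.ofMul (Units.mk0 b hb0))
          = (i * j) • t := by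
        rw [← hi, ← hj, ofMul_zpow, ofMul_zpow, k2aux_smul_tmul F, k2aux_tmul_smul F,
          smul_smul, hxt, hx]
      rw [← this]
      exact Submodule.subset_span ⟨Units.mk0 a ha0, Units.mk0 b hb0, by simp [hab], rfl⟩
    have hIn : (orderOf g : ℤ) ∈ I := by
      rw [hmem]
      have hxo : (orderOf g : ℤ) • x = 0 := by
        rw [hx, ← ofMul_zpow, zpow_natCast, pow_orderOf_eq_one, ofMul_one]
      rw [hxt, ← k2aux_smul_tmul F, hxo, TensorProduct.zero_tmul]
      exact zero_mem _
    have h2m : (2 * m : ℤ) ∈ I := by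
      have hdvd : (orderOf g : ℤ) ∣ 2 * m := by
        rw [orderOf_dvd_iff_zpow_eq_one, mul_comm, zpow_mul, hm, zpow_two, neg_one_mul, neg_neg]
      obtain ⟨c, hc⟩ := hdvd
      rw [hc, mul_comm]
      exact I.smul_mem c hIn
    have h2I : (2 : ℤ) ∈ I := by
      have hmem2 := I.sub_mem (I.smul_mem 2 hAm) h2m
      have heq : (2 : ℤ) • (m + 1) - 2 * m = 2 := by rw [smul_eq_mul]; ring
      rwa [heq] at hmem2
    obtain ⟨k, hk⟩ := hoddi.mul hoddj
    have h1I : (1 : ℤ) ∈ I := by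
      have hmem1 := I.sub_mem hrel (I.smul_mem k h2I)
      have heq : (i * j : ℤ) - k • (2 : ℤ) = 1 := by rw [smul_eq_mul]; omega
      rwa [heq] at hmem1
    have := (hmem 1).mp h1I
    rwa [one_smul] at this
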